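/- Let (Q_N^f) be a tight sequence of probability measures on C([0,1]) with Q_N^f concentrated on paths starting at 0. Define g_γ(δ) := inf_{N ∈ ℕ, 1 ≤ t ≤ N} Q_t^f( Γ((N/t)δ) ≤ γ √(N/t) ), where Γ(δ')[x] is the modulus of continuity at scale min(δ',1). Then for every γ > 0, lim inf_{δ→0} g_γ(δ) = 1. -/

import Mathlib

open MeasureTheory Filter Set

/-- The continuity modulus of `x : C([0,1], ℝ)` at scale `min δ' 1`. -/
noncomputable def capModulus (x : C(unitInterval, ℝ)) (δ' : ℝ) : ℝ :=
  sSup {r : ℝ | ∃ u v : unitInterval, |(u : ℝ) - (v : ℝ)| ≤ min δ' 1 ∧ r = |x u - x v|}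

variable [MeasurableSpace C(unitInterval, ℝ)] [BorelSpace C(unitInterval, ℝ)]

/-- A sequence of Borel measures on `C([0,1])` is tight. -/
def IsTightSeq (Q : ℕ → Measure C(unitInterval, ℝ)) : Prop :=
  ∀ ε : ℝ, 0 < ε → ∃ K : Set C(unitInterval, ℝ), IsCompact K ∧
    ∀ N, Q N Kᶜ ≤ ENNReal.ofReal ε

/-- A compact set of continuous functions on `[0,1]` is uniformly equicontinuous. -/
lemma equicont_of_isCompact' {K : Set C(unitInterval, ℝ)} (hK : IsCompact K)
    {η : ℝ} (hη : 0 < η) :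
    ∃ δ2 > 0, ∀ x ∈ K, ∀ u v : unitInterval, dist u v ≤ δ2 → |x u - x v| ≤ η := by
  obtain ⟨t, htf, hcov⟩ := Metric.totallyBounded_iff.mp hK.totallyBounded (η / 3)
    (by linarith)
  have hd : ∀ y : C(unitInterval, ℝ), ∃ d > 0,
      ∀ u v : unitInterval, dist u v < d → dist (y u) (y v) < η / 3 := by
    intro y
    have huc : UniformContinuous (y : unitInterval → ℝ) :=
      CompactSpace.uniformContinuous_of_continuous y.continuous
    exact Metric.uniformContinuous_iff.mp huc (η / 3) (by linarith)
  choose d hd1 hd2 using hd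
  rcases t.eq_empty_or_nonempty with rfl | hne
  · refine ⟨1, one_pos, ?_⟩
    intro x hx
    have := hcov hx
    simp at this
  · set F := htf.toFinset with hF
    have hFne : F.Nonempty := by rwa [hF, Set.Finite.toFinset_nonempty]
    set δ0 := F.inf' hFne d with hδ0def
    have hδ0pos : 0 < δ0 := by
      rw [hδ0def, Finset.lt_inf'_iff]
      exact fun y _ => hd1 y
    refine ⟨δ0 / 2, by linarith, ?_⟩
    intro x hx u v huv
    obtain ⟨y, hyt, hxy⟩ := Set.mem_iUnion₂.mp (hcov hx)
    have hxy' : dist x y < η / 3 := Metric.mem_ball.mp hxy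
    have h1 : ∀ w : unitInterval, |x w - y w| ≤ η / 3 := by
      intro w
      have := (ContinuousMap.dist_apply_le_dist (f := x) (g := y) w).trans hxy'.le
      rwa [Real.dist_eq] at this
    have h2 : |y u - y v| ≤ η / 3 := by
      have hdy : δ0 ≤ d y := Finset.inf'_le d (by rwa [hF, Set.Finite.mem_toFinset])
      have : dist (y u) (y v) < η / 3 := hd2 y u v (lt_of_le_of_lt huv (by linarith))
      rw [Real.dist_eq] at this
      exact this.le
    calc |x u - x v| = |(x u - y u) + (y u - y v) + (y v - x v)| := by ring_nf
      _ ≤ |x u - y u| + |y u - y v| + |y v - x v| := by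
          exact (abs_add_le _ _).trans (add_le_add_left (abs_add_le _ _) _)
      _ ≤ η / 3 + η / 3 + η / 3 := by
          have h3 : |y v - x v| ≤ η / 3 := by rw [abs_sub_comm]; exact h1 v
          exact add_le_add (add_le_add (h1 u) h2) h3
      _ = η := by ring

/-- If `(Q_t^f)` is a tight sequence of probability measures on `C([0,1])`
concentrated on paths starting at `0`, then
`g_γ(δ) := inf_{N, 1 ≤ t ≤ N} Q_t^f( Γ((N/t)δ) ≤ γ √(N/t) )` satisfies
`liminf_{δ→0⁺} g_γ(δ) = 1` for every `γ > 0`. -/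
theorem liminf_final_excursion (Qf : ℕ → Measure C(unitInterval, ℝ))
    (hprob : ∀ t, IsProbabilityMeasure (Qf t))
    (hzero : ∀ t, Qf t {x | x 0 = 0} = 1)
    (htight : IsTightSeq Qf) (γ : ℝ) (hγ : 0 < γ) :
    Filter.liminf (fun δ : ℝ =>
        ⨅ q : {q : ℕ × ℕ // 1 ≤ q.2 ∧ q.2 ≤ q.1},
          ((Qf q.1.2) {x | capModulus x (((q.1.1 : ℝ) / (q.1.2 : ℝ)) * δ) ≤
            γ * Real.sqrt ((q.1.1 : ℝ) / (q.1.2 : ℝ))}).toReal)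
      (nhdsWithin 0 (Set.Ioi 0)) = 1 := by
  have hne : Nonempty {q : ℕ × ℕ // 1 ≤ q.2 ∧ q.2 ≤ q.1} :=
    ⟨⟨(1, 1), le_refl 1, le_refl 1⟩⟩
  set f : ℝ → ℝ := fun δ =>
    ⨅ q : {q : ℕ × ℕ // 1 ≤ q.2 ∧ q.2 ≤ q.1},
      ((Qf q.1.2) {x | capModulus x (((q.1.1 : ℝ) / (q.1.2 : ℝ)) * δ) ≤
        γ * Real.sqrt ((q.1.1 : ℝ) / (q.1.2 : ℝ))}).toReal with hfdef
  have hterm_le_one : ∀ (t : ℕ) (S : Set C(unitInterval, ℝ)), ((Qf t) S).toReal ≤ 1 := by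
    intro t S
    haveI := hprob t
    calc ((Qf t) S).toReal ≤ ((Qf t) univ).toReal :=
          ENNReal.toReal_mono (measure_ne_top _ _) (measure_mono (subset_univ _))
      _ = 1 := by simp
  have h0 : ∀ δ, 0 ≤ f δ := fun δ => le_ciInf fun q => ENNReal.toReal_nonneg
  have hbb : ∀ δ : ℝ, BddBelow (Set.range fun q : {q : ℕ × ℕ // 1 ≤ q.2 ∧ q.2 ≤ q.1} =>
      ((Qf q.1.2) {x | capModulus x (((q.1.1 : ℝ) / (q.1.2 : ℝ)) * δ) ≤
        γ * Real.sqrt ((q.1.1 : ℝ) / (q.1.2 : ℝ))}).toReal) := by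
    intro δ
    refine ⟨0, ?_⟩
    rintro r ⟨q, rfl⟩
    exact ENNReal.toReal_nonneg
  have h1 : ∀ δ, f δ ≤ 1 := by
    intro δ
    exact ciInf_le_of_le (hbb δ) ⟨(1, 1), le_refl 1, le_refl 1⟩ (hterm_le_one _ _)
  -- key quantitative estimate
  have hkey : ∀ ε : ℝ, 0 < ε → ∃ δ0 > 0, ∀ δ : ℝ, 0 < δ → δ ≤ δ0 → 1 - ε ≤ f δ := by
    intro ε hε
    obtain ⟨K, hKc, hKm⟩ := htight ε hε
    obtain ⟨r0, hr0⟩ := hKc.isBounded.subset_closedBall 0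
    set M := max r0 0 with hMdef
    have hM0 : 0 ≤ M := le_max_right _ _
    have hbound : ∀ x ∈ K, ∀ u : unitInterval, |x u| ≤ M := by
      intro x hx u
      have h1 : ‖x‖ ≤ r0 := by
        have := hr0 hx
        rwa [Metric.mem_closedBall, dist_zero_right] at this
      calc |x u| = ‖x u‖ := (Real.norm_eq_abs _).symm
        _ ≤ ‖x‖ := ContinuousMap.norm_coe_le_norm x u
        _ ≤ M := h1.trans (le_max_left _ _)
    obtain ⟨δ2, hδ2, hequi⟩ := equicont_of_isCompact' hKc hγ
    set B := (2 * M / γ) ^ 2 with hBdef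
    have hB0 : 0 ≤ B := sq_nonneg _
    refine ⟨δ2 / (B + 1), by positivity, ?_⟩
    intro δ hδpos hδle
    rw [hfdef]
    apply le_ciInf
    rintro ⟨⟨N, t⟩, ht1, htN⟩
    simp only
    set r : ℝ := (N : ℝ) / (t : ℝ) with hrdef
    have htpos : (0 : ℝ) < (t : ℝ) := by exact_mod_cast lt_of_lt_of_le one_pos ht1
    have hr1 : 1 ≤ r := (one_le_div htpos).mpr (by exact_mod_cast htN)
    have hsqrt1 : 1 ≤ Real.sqrt r := Real.one_le_sqrt.mpr hr1
    have hγr0 : 0 ≤ γ * Real.sqrt r := by positivity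
    have hKS : K ⊆ {x : C(unitInterval, ℝ) |
        capModulus x (r * δ) ≤ γ * Real.sqrt r} := by
      intro x hx
      simp only [mem_setOf_eq, capModulus]
      rcases le_or_gt (γ * Real.sqrt r) (2 * M) with hcase | hcase
      · have hrB : r ≤ B := by
          have hs : Real.sqrt r ≤ 2 * M / γ := by
            rw [le_div_iff₀ hγ]
            calc Real.sqrt r * γ = γ * Real.sqrt r := mul_comm _ _
              _ ≤ 2 * M := hcase
          calc r = Real.sqrt r ^ 2 := (Real.sq_sqrt (by linarith)).symm
            _ ≤ (2 * M / γ) ^ 2 := by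
                exact pow_le_pow_left₀ (Real.sqrt_nonneg _) hs 2
            _ = B := hBdef.symm
        have hrδ : r * δ ≤ δ2 := by
          calc r * δ ≤ B * δ := mul_le_mul_of_nonneg_right hrB hδpos.le
            _ ≤ B * (δ2 / (B + 1)) := mul_le_mul_of_nonneg_left hδle hB0
            _ ≤ δ2 := by
                rw [mul_div_assoc']
                rw [div_le_iff₀ (by linarith)]
                nlinarith
        apply Real.sSup_le _ hγr0
        rintro ρ ⟨u, v, huv, rfl⟩
        have huv2 : dist u v ≤ δ2 := by
          rw [Subtype.dist_eq, Real.dist_eq]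
          exact huv.trans ((min_le_left _ _).trans hrδ)
        calc |x u - x v| ≤ γ := hequi x hx u v huv2
          _ ≤ γ * Real.sqrt r := le_mul_of_one_le_right hγ.le hsqrt1
      · apply Real.sSup_le _ hγr0
        rintro ρ ⟨u, v, huv, rfl⟩
        calc |x u - x v| ≤ |x u| + |x v| := abs_sub _ _
          _ ≤ M + M := add_le_add (hbound x hx u) (hbound x hx v)
          _ ≤ γ * Real.sqrt r := by linarith
    haveI := hprob t
    have hKmeas : MeasurableSet K := hKc.isClosed.measurableSet
    have hco : ((Qf t) Kᶜ).toReal ≤ ε := ENNReal.toReal_le_of_le_ofReal hε.le (hKm t)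
    have hsum : ((Qf t) K).toReal + ((Qf t) Kᶜ).toReal = 1 := by
      rw [← ENNReal.toReal_add (measure_ne_top _ _) (measure_ne_top _ _),
        measure_add_measure_compl hKmeas]
      simp
    have hK1 : 1 - ε ≤ ((Qf t) K).toReal := by linarith
    exact hK1.trans (ENNReal.toReal_mono (measure_ne_top _ _) (measure_mono hKS))
  -- conclude about the liminf
  have hbdd_ge : IsBoundedUnder (· ≥ ·) (nhdsWithin (0 : ℝ) (Set.Ioi 0)) f :=
    ⟨0, by simpa [Filter.eventually_map] using Eventually.of_forall h0⟩
  have hbdd_le : IsBoundedUnder (· ≤ ·) (nhdsWithin (0 : ℝ) (Set.Ioi 0)) f :=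
    ⟨1, by simpa [Filter.eventually_map] using Eventually.of_forall h1⟩
  apply le_antisymm
  · exact liminf_le_of_frequently_le (Eventually.of_forall h1).frequently hbdd_ge
  · apply le_of_forall_sub_le
    intro ε hε
    obtain ⟨δ0, hδ0, hk⟩ := hkey ε hε
    refine le_liminf_of_le hbdd_le.isCoboundedUnder_ge ?_
    filter_upwards [Ioo_mem_nhdsGT hδ0]
      with δ hδ
    exact hk δ hδ.1 hδ.2.le
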